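/- For every n ≥ 3, the formula F_ac(n), consisting of the clauses {y_{j−1}, ¬y_j} ∪ C_j for 1 < j ≤ 2^n, the clause {y_{2^n}, ¬y_1} ∪ C_1, the clauses {y_j, y_{j+1}} ∪ C_j for 1 ≤ j ≤ 2^n (indices of y modulo 2^n), and {y_{2^n}, y_1} ∪ C_{2^n}, where C_1,…,C_{2^n} enumerate all clauses over x_1,…,x_n, is a hitting formula: any two distinct clauses C, C' of F_ac(n) satisfy C ∩ ¬C' ≠ ∅. -/

import Mathlib

open Finset

def negLit {V : Type} (l : V × Bool) : V × Bool := (l.1, !l.2)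

abbrev Clause (V : Type) := Finset (V × Bool)
abbrev CNF (V : Type) := Finset (Finset (V × Bool))

variable {V : Type} [DecidableEq V]

def clauseVars (C : Clause V) : Finset V := C.image Prod.fst

def fvars (F : CNF V) : Finset V := F.sup clauseVars

def varOccurs (x : V) (C : Clause V) : Prop := (x, true) ∈ C ∨ (x, false) ∈ C

def NonTaut (C : Clause V) : Prop := ∀ l ∈ C, negLit l ∉ C

def satClause (τ : V → Bool) (C : Clause V) : Prop := ∃ l ∈ C, τ l.1 = l.2

def satCNF (τ : V → Bool) (F : CNF V) : Prop := ∀ C ∈ F, satClause τ C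

def Satisfiable (F : CNF V) : Prop := ∃ τ, satCNF τ F

/-- `R` is the `x`-resolvent of `C` and `D` (with `x` occurring positively in `C`). -/
def IsResolventOn (x : V) (C D R : Clause V) : Prop :=
  C ∩ D.image negLit = {(x, true)} ∧
    R = (C ∪ D) \ ({(x, true), (x, false)} : Clause V)

/-- Davis-Putnam elimination of variable `x`: add all `x`-resolvents and remove
all clauses in which `x` occurs. -/
def DP (x : V) (F : CNF V) : CNF V :=
  (((F ×ˢ F).filter fun p => p.1 ∩ p.2.image negLit = {(x, true)}).image
      fun p => (p.1 ∪ p.2) \ ({(x, true), (x, false)} : Clause V)) ∪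
    F.filter fun C => (x, true) ∉ C ∧ (x, false) ∉ C

def DPSeq : List V → CNF V → CNF V
  | [], F => F
  | x :: xs, F => DPSeq xs (DP x F)

def DPSimplicial (x : V) (F : CNF V) : Prop :=
  ∀ C ∈ F, ∀ D ∈ F, ∀ R : Clause V, IsResolventOn x C D R → R ⊆ C ∨ R ⊆ D

def WeaklySimplicialVar (x : V) (F : CNF V) : Prop :=
  ∀ C ∈ F, ∀ D ∈ F, varOccurs x C → varOccurs x D →
    clauseVars C ⊆ clauseVars D ∨ clauseVars D ⊆ clauseVars C

def IsDPSElim : List V → CNF V → Prop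
  | [], _ => True
  | x :: xs, F => DPSimplicial x F ∧ IsDPSElim xs (DP x F)

def IsWSElim : List V → CNF V → Prop
  | [], _ => True
  | x :: xs, F => WeaklySimplicialVar x F ∧ IsWSElim xs (DP x F)

def HasDPSElimOrdering (F : CNF V) : Prop :=
  ∃ l : List V, l.toFinset = fvars F ∧ IsDPSElim l F

def HasWSElimOrdering (F : CNF V) : Prop :=
  ∃ l : List V, l.toFinset = fvars F ∧ IsWSElim l F

/-- `F − B`: remove all literals over variables in `B` from all clauses. -/
def minusVars (F : CNF V) (B : Finset V) : CNF V :=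
  F.image fun C => C.filter fun l => l.1 ∉ B

/-- `F[τ]` for the partial assignment given by restricting `τ` to `B`:
remove satisfied clauses and delete falsified literals. -/
def reduct (F : CNF V) (B : Finset V) (τ : V → Bool) : CNF V :=
  (F.filter fun C => ∀ l ∈ C, l.1 ∈ B → τ l.1 ≠ l.2).image
    fun C => C.filter fun l => l.1 ∉ B


/-- The `j`-th full clause over variables `0, …, n-1` (signs given by binary digits of `j`). -/
def fullClause (n j : ℕ) : Clause ℕ :=
  (Finset.range n).image fun i => ((i : ℕ), j.testBit i)

/-- `F_ac(n)`: variables `x_i = i` (`i < n`) and `y_j = n + j` (`j < 2^n`); clauses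
`{y_{j−1}, ¬y_j} ∪ C_j` and `{y_j, y_{j+1}} ∪ C_j` for all `j` (indices of `y` mod `2^n`),
where `C_0, …, C_{2^n−1}` enumerate all clauses over `x_0, …, x_{n−1}`. -/
def Fac (n : ℕ) : CNF ℕ :=
  ((Finset.range (2 ^ n)).image fun j =>
      insert ((n + (j + 2 ^ n - 1) % 2 ^ n : ℕ), true)
        (insert ((n + j : ℕ), false) (fullClause n j))) ∪
    ((Finset.range (2 ^ n)).image fun j =>
      insert ((n + j : ℕ), true)
        (insert ((n + (j + 1) % 2 ^ n : ℕ), true) (fullClause n j)))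

/-- for `n ≥ 3`, `F_ac(n)` is a hitting formula: any two distinct
clauses clash. -/

lemma fullClause_clash {n j j' : ℕ} (hj : j < 2 ^ n) (hj' : j' < 2 ^ n) (h : j ≠ j') :
    ∃ l ∈ fullClause n j, negLit l ∈ fullClause n j' := by
  have hx : ∃ i, j.testBit i ≠ j'.testBit i := by
    by_contra h2; push_neg at h2; exact h (Nat.eq_of_testBit_eq h2)
  obtain ⟨i, hi⟩ := hx
  have hin : i < n := by
    by_contra hge
    push_neg at hge
    have h1 : j.testBit i = false := Nat.testBit_lt_two_pow (lt_of_lt_of_le hj (Nat.pow_le_pow_right (by norm_num) hge))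
    have h2 : j'.testBit i = false := Nat.testBit_lt_two_pow (lt_of_lt_of_le hj' (Nat.pow_le_pow_right (by norm_num) hge))
    rw [h1, h2] at hi; exact hi rfl
  refine ⟨(i, j.testBit i), ?_, ?_⟩
  · simp [fullClause]; exact hin
  · have : (!j.testBit i) = j'.testBit i := by
      cases hb : j.testBit i <;> cases hb' : j'.testBit i <;> simp_all
    simp [negLit, fullClause, this]; exact hin

lemma fullClause_subset_insert {n j : ℕ} {a b : ℕ × Bool} :
    fullClause n j ⊆ insert a (insert b (fullClause n j)) := by
  intro l hl; simp [hl]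

theorem Fac_hitting (n : ℕ) (hn : 3 ≤ n) :
    ∀ C ∈ Fac n, ∀ D ∈ Fac n, C ≠ D → ∃ l ∈ C, negLit l ∈ D := by
  intro C hC D hD hne
  simp only [Fac, Finset.mem_union, Finset.mem_image, Finset.mem_range] at hC hD
  have key : ∀ (j j' : ℕ) (a b a' b' : ℕ × Bool), j < 2 ^ n → j' < 2 ^ n → j ≠ j' →
      ∃ l ∈ insert a (insert b (fullClause n j)),
        negLit l ∈ insert a' (insert b' (fullClause n j')) := by
    intro j j' a b a' b' hj hj' hjj
    obtain ⟨l, hl, hl'⟩ := fullClause_clash hj hj' hjj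
    exact ⟨l, fullClause_subset_insert hl, fullClause_subset_insert hl'⟩
  rcases hC with ⟨j, hj, rfl⟩ | ⟨j, hj, rfl⟩ <;> rcases hD with ⟨j', hj', rfl⟩ | ⟨j', hj', rfl⟩
  · rcases eq_or_ne j j' with rfl | hjj
    · exact absurd rfl hne
    · exact key j j' _ _ _ _ hj hj' hjj
  · rcases eq_or_ne j j' with rfl | hjj
    · exact ⟨((n + j : ℕ), false), by simp, by simp [negLit]⟩
    · exact key j j' _ _ _ _ hj hj' hjj
  · rcases eq_or_ne j j' with rfl | hjj
    · exact ⟨((n + j : ℕ), true), by simp, by simp [negLit]⟩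
    · exact key j j' _ _ _ _ hj hj' hjj
  · rcases eq_or_ne j j' with rfl | hjj
    · exact absurd rfl hne
    · exact key j j' _ _ _ _ hj hj' hjj
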